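/- Any binary tree whose leaves, read left-to-right, are the keys 1,...,n in increasing order can be converted to a binary search tree on the same keys in which the depth of each key is at most its depth in the original tree. -/

import Mathlib

/-- Binary trees with keys at the leaves. -/
inductive BTree where
  | leaf (k : ℕ)
  | node (l r : BTree)

/-- The leaves of a binary tree, read left-to-right. -/
def BTree.leaves : BTree → List ℕ
  | .leaf k => [k]
  | .node l r => l.leaves ++ r.leaves

/-- Depth (root has depth 1) of the leaf holding key `x`, if present. -/
def BTree.depthOf : BTree → ℕ → Option ℕ
  | .leaf k, x => if k = x then some 1 else none
  | .node l r, x => ((l.depthOf x).map (· + 1)) <|> ((r.depthOf x).map (· + 1))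

/-- Binary search trees with keys at internal nodes. -/
inductive BST where
  | nil
  | node (l : BST) (k : ℕ) (r : BST)

/-- In-order key sequence of a BST. -/
def BST.inorder : BST → List ℕ
  | .nil => []
  | .node l k r => l.inorder ++ k :: r.inorder

/-- The symmetric order property. -/
def BST.isSearchTree : BST → Prop
  | .nil => True
  | .node l k r => (∀ x ∈ l.inorder, x < k) ∧ (∀ x ∈ r.inorder, k < x) ∧
      l.isSearchTree ∧ r.isSearchTree

/-- Depth (root has depth 1) of key `x` in a BST, if present. -/
def BST.depthOf : BST → ℕ → Option ℕ
  | .nil, _ => none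
  | .node l k r, x =>
      if k = x then some 1
      else ((l.depthOf x).map (· + 1)) <|> ((r.depthOf x).map (· + 1))

def gKey : BTree → ℕ
  | .leaf k => k
  | .node l _ => gKey l

def gTree : BTree → BST
  | .leaf _ => .nil
  | .node l r => .node (gTree l) (gKey r) (gTree r)

def conv : BTree → BST
  | .leaf k => .node .nil k .nil
  | .node l r => .node (conv l) (gKey r) (gTree r)

lemma gTree_inorder (T : BTree) : T.leaves = gKey T :: (gTree T).inorder := by
  induction T with
  | leaf k => rfl
  | node l r ihl ihr =>
      simp [BTree.leaves, gKey, gTree, BST.inorder, ihl, ihr]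

lemma conv_inorder (T : BTree) : (conv T).inorder = T.leaves := by
  induction T with
  | leaf k => rfl
  | node l r ihl ihr =>
      simp [BTree.leaves, conv, BST.inorder, ihl, gTree_inorder r]

lemma btree_depth_none {T : BTree} {x : ℕ} (h : T.depthOf x = none) :
    x ∉ T.leaves := by
  induction T with
  | leaf k =>
      simp only [BTree.depthOf] at h
      split at h <;> simp_all [BTree.leaves] <;> omega
  | node l r ihl ihr =>
      simp only [BTree.depthOf] at h
      cases hl : l.depthOf x <;> cases hr : r.depthOf x <;>
        simp [hl, hr] at h <;> simp [BTree.leaves, ihl hl, ihr hr]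

lemma bst_depth_none {B : BST} {x : ℕ} (h : x ∉ B.inorder) :
    B.depthOf x = none := by
  induction B with
  | nil => rfl
  | node l k r ihl ihr =>
      simp [BST.inorder] at h
      push_neg at h
      obtain ⟨h1, h2, h3⟩ := h
      simp [BST.depthOf, Ne.symm h2, ihl h1, ihr h3]

lemma g_depth (T : BTree) : ∀ x d, T.depthOf x = some d →
    x = gKey T ∨ ∃ d' ≤ d, (gTree T).depthOf x = some d' := by
  induction T with
  | leaf k =>
      intro x d h
      simp only [BTree.depthOf] at h
      split at h <;> simp_all [gKey]
  | node l r ihl ihr =>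
      intro x d h
      simp only [BTree.depthOf] at h
      cases hl : l.depthOf x with
      | some d₁ =>
          simp [hl] at h
          rcases ihl x d₁ hl with heq | ⟨d', hd', hB⟩
          · exact Or.inl heq
          · right
            by_cases hk : gKey r = x
            · exact ⟨1, by omega, by simp [gTree, BST.depthOf, hk]⟩
            · exact ⟨d' + 1, by omega, by simp [gTree, BST.depthOf, hk, hB]⟩
      | none =>
          simp [hl] at h
          obtain ⟨d₂, hr, hd⟩ := h
          right
          have hnotl : x ∉ l.leaves := btree_depth_none hl
          have hnotl' : (gTree l).depthOf x = none := by
            apply bst_depth_none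
            intro hx
            exact hnotl (by rw [gTree_inorder l]; exact List.mem_cons_of_mem _ hx)
          by_cases hk : gKey r = x
          · exact ⟨1, by omega, by simp [gTree, BST.depthOf, hk]⟩
          · rcases ihr x d₂ hr with heq | ⟨d', hd', hB⟩
            · exact absurd heq.symm hk
            · exact ⟨d' + 1, by omega, by simp [gTree, BST.depthOf, hk, hnotl', hB]⟩

lemma conv_depth (T : BTree) : ∀ x d, T.depthOf x = some d →
    ∃ d' ≤ d, (conv T).depthOf x = some d' := by
  induction T with
  | leaf k =>
      intro x d h
      simp only [BTree.depthOf] at h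
      split at h <;> simp_all [conv, BST.depthOf]
  | node l r ihl ihr =>
      intro x d h
      simp only [BTree.depthOf] at h
      by_cases hk : gKey r = x
      · refine ⟨1, ?_, by simp [conv, BST.depthOf, hk]⟩
        cases hl : l.depthOf x <;> simp [hl] at h <;> omega
      · cases hl : l.depthOf x with
        | some d₁ =>
            simp [hl] at h
            obtain ⟨d', hd', hB⟩ := ihl x d₁ hl
            exact ⟨d' + 1, by omega, by simp [conv, BST.depthOf, hk, hB]⟩
        | none =>
            simp [hl] at h
            obtain ⟨d₂, hr, hd⟩ := h
            have hnotl : x ∉ l.leaves := btree_depth_none hl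
            have hnotl' : (conv l).depthOf x = none := by
              apply bst_depth_none
              rw [conv_inorder]; exact hnotl
            rcases g_depth r x d₂ hr with heq | ⟨d', hd', hB⟩
            · exact absurd heq.symm hk
            · exact ⟨d' + 1, by omega,
                by simp [conv, BST.depthOf, hk, hnotl', hB]⟩

lemma sorted_isSearchTree {B : BST} (h : B.inorder.Pairwise (· < ·)) :
    B.isSearchTree := by
  induction B with
  | nil => trivial
  | node l k r ihl ihr =>
      simp only [BST.inorder] at h
      obtain ⟨hl, hkr, hcross⟩ := List.pairwise_append.mp h
      rw [List.pairwise_cons] at hkr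
      refine ⟨fun x hx => hcross x hx k List.mem_cons_self, hkr.1,
        ihl hl, ihr hkr.2⟩

/-- Any binary tree whose leaves, left-to-right, are the keys `1, …, n` in
    increasing order can be converted to a binary search tree on the same keys
    in which no key's depth increases. -/
theorem prefixTree_to_bst (n : ℕ) (T : BTree)
    (h : T.leaves = (List.range n).map (· + 1)) :
    ∃ B : BST, B.isSearchTree ∧ B.inorder = T.leaves ∧
      ∀ k d, T.depthOf k = some d → ∃ d' ≤ d, B.depthOf k = some d' := by
  refine ⟨conv T, ?_, conv_inorder T, fun k d hd => conv_depth T k d hd⟩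
  apply sorted_isSearchTree
  rw [conv_inorder, h]
  exact (List.pairwise_lt_range (n := n)).map _ (fun a b hab => by omega)
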